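/- Let 𝓕₂ be the free module over ZMod 2 on the set of finite sequences of positive integers, with basis {S^I} and product given by concatenation of sequences, S^I * S^J = S^{I ⌢ J} (the monoid algebra over ZMod 2 of the free monoid on the positive integers). Define χ'(S^I) := Σ_{I' : reverse(I) ∈ C(I')} S^{I'} (a finite sum over all sequences I' of positive integers of which reverse(I) is a coarsening), and χ'(S^{()}) := S^{()}. Then for every nonempty sequence I = (i_1,…,i_n) of positive integers: Σ over all pairs of sequences a, b ∈ ℕ^n with a_j + b_j = i_j for all j, of S^{strip(a)} * χ'(S^{strip(b)}) = 0 in 𝓕₂, where strip deletes all zero entries of a sequence. (That is, χ' is the conjugation/antipode of the mod 2 Leibniz–Hopf algebra, whose coproduct is Δ(S^n) = Σ_{i=0}^{n} S^i ⊗ S^{n−i}.) -/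

import Mathlib

/-- The underlying free module over `ZMod 2` on the set of finite sequences
(this carries the mod 2 dual Leibniz--Hopf algebra `𝓕₂*`). -/
abbrev F2D : Type := (List ℕ) →₀ ZMod 2

/-- The basis element `S_I`. -/
noncomputable def sElem (I : List ℕ) : F2D := Finsupp.single I 1

/-- The product of the mod 2 Leibniz--Hopf algebra `𝓕₂` (the monoid algebra
over `ZMod 2` of the free monoid on the positive integers): on basis elements,
`S^I * S^J = S^{I ⌢ J}`. -/
noncomputable def cmul (x y : F2D) : F2D :=
  x.sum fun I a => y.sum fun J b => (a * b) • sElem (I ++ J)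

/-- The coarsening set `C(I)`: all sequences obtained from `I` by summing
consecutive blocks of entries.  (`C([]) = {[]}` by convention.) -/
def coars : List ℕ → Finset (List ℕ)
  | [] => {[]}
  | [i] => {[i]}
  | i :: j :: rest =>
      ((coars (j :: rest)).image (i :: ·)) ∪
      ((coars (j :: rest)).image (fun I' => (i + I'.headD 0) :: I'.tail))

/-- The set of compositions of `n`: finite sequences of positive integers with
sum `n`. -/
def comps : ℕ → Finset (List ℕ)
  | 0 => {([] : List ℕ)}
  | n + 1 =>
      (Finset.range (n + 1)).attach.biUnion fun k =>
        (comps k.1).image fun α => (n + 1 - k.1) :: α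
termination_by n => n
decreasing_by
  have h := Finset.mem_range.mp k.2
  omega

/-- The set of refinements of `J`: all sequences of positive integers of which
`J` is a coarsening (each entry of `J` is split into a composition). -/
def refines : List ℕ → Finset (List ℕ)
  | [] => {([] : List ℕ)}
  | j :: rest => ((comps j) ×ˢ (refines rest)).image fun p => p.1 ++ p.2

/-- `χ'(S^I) = Σ_{I' : reverse I ∈ C(I')} S^{I'}` in `𝓕₂`
(with `χ'(S^{()}) = S^{()}`). -/
noncomputable def chiF (I : List ℕ) : F2D := ∑ I' ∈ refines I.reverse, sElem I'

/-- All sequences `a ∈ ℕ^n` with `a_j ≤ i_j` pointwise below `I = (i_1,…,i_n)`. -/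
def subLists : List ℕ → Finset (List ℕ)
  | [] => {([] : List ℕ)}
  | i :: rest => ((Finset.range (i + 1)) ×ˢ subLists rest).image fun p => p.1 :: p.2

open Finset in
section
-- comps membership characterization
theorem comps_mem : ∀ (n : ℕ) (c : List ℕ), c ∈ comps n ↔ c.sum = n ∧ ∀ x ∈ c, 0 < x := by
  intro n
  induction n using Nat.strong_induction_on with
  | _ n ih =>
    intro c
    match n with
    | 0 =>
      simp only [comps]
      constructor
      · rintro h; simp at h; subst h; simp
      · rintro ⟨hs, hp⟩
        have : c = [] := by
          cases c with
          | nil => rfl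
          | cons x t => exfalso; have := hp x (by simp); simp at hs; omega
        simp [this]
    | n + 1 =>
      rw [comps]
      simp only [Finset.mem_biUnion, Finset.mem_attach, Finset.mem_image, true_and]
      constructor
      · rintro ⟨⟨k, hk⟩, α, hα, rfl⟩
        have hk' := Finset.mem_range.mp hk
        have := (ih k (by omega) α).mp hα
        constructor
        · simp [this.1]; omega
        · intro x hx
          simp at hx
          rcases hx with rfl | hx
          · omega
          · exact this.2 x hx
      · rintro ⟨hs, hp⟩
        cases c with
        | nil => simp at hs
        | cons h t =>
          have hh : 0 < h := hp h (by simp)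
          simp at hs
          refine ⟨⟨t.sum, Finset.mem_range.mpr (by omega)⟩, t, ?_, ?_⟩
          · exact (ih t.sum (by omega) t).mpr ⟨rfl, fun x hx => hp x (by simp [hx])⟩
          · show (n + 1 - t.sum) :: t = h :: t
            congr 1; omega

theorem comps_pos {n : ℕ} {c : List ℕ} (h : c ∈ comps n) : ∀ x ∈ c, 0 < x :=
  ((comps_mem n c).mp h).2

theorem comps_sum {n : ℕ} {c : List ℕ} (h : c ∈ comps n) : c.sum = n :=
  ((comps_mem n c).mp h).1

-- cancel lemma
theorem append_cancel_of_sum : ∀ (c c' R R' : List ℕ), c ++ R = c' ++ R' → c.sum = c'.sum →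
    (∀ x ∈ c, 0 < x) → (∀ x ∈ c', 0 < x) → c = c' ∧ R = R' := by
  intro c
  induction c with
  | nil =>
    intro c' R R' he hs hp hp'
    have : c' = [] := by
      cases c' with
      | nil => rfl
      | cons x t => exfalso; have := hp' x (by simp); simp at hs; omega
    subst this; simpa using he
  | cons x t ihc =>
    intro c' R R' he hs hp hp'
    cases c' with
    | nil => exfalso; have := hp x (by simp); simp at hs; omega
    | cons x' t' =>
      simp at he hs
      obtain ⟨rfl, he⟩ := he
      have := ihc t' R R' he (by omega) (fun y hy => hp y (by simp [hy]))
        (fun y hy => hp' y (by simp [hy]))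
      exact ⟨by rw [this.1], this.2⟩

theorem refines_cons (j : ℕ) (J : List ℕ) (K : List ℕ) :
    K ∈ refines (j :: J) ↔ ∃ c R, c ∈ comps j ∧ R ∈ refines J ∧ K = c ++ R := by
  rw [refines]
  simp only [Finset.mem_image, Finset.mem_product, Prod.exists]
  constructor
  · rintro ⟨c, R, ⟨h1, h2⟩, rfl⟩; exact ⟨c, R, h1, h2, rfl⟩
  · rintro ⟨c, R, h1, h2, rfl⟩; exact ⟨c, R, ⟨h1, h2⟩, rfl⟩

theorem refines_nil (K : List ℕ) : K ∈ refines [] ↔ K = [] := by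
  rw [refines]; simp

theorem refines_pos : ∀ (J : List ℕ) (K : List ℕ), K ∈ refines J → ∀ x ∈ K, 0 < x := by
  intro J
  induction J with
  | nil => intro K hK; rw [refines_nil] at hK; subst hK; simp
  | cons j J ih =>
    intro K hK
    rw [refines_cons] at hK
    obtain ⟨c, R, hc, hR, rfl⟩ := hK
    intro x hx
    rcases List.mem_append.mp hx with hx | hx
    · exact comps_pos hc x hx
    · exact ih R hR x hx

theorem nil_mem_refines (J : List ℕ) (hJ : ∀ j ∈ J, 0 < j) : [] ∈ refines J ↔ J = [] := by
  cases J with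
  | nil => simp [refines_nil]
  | cons j J =>
    simp only [refines_cons]
    constructor
    · rintro ⟨c, R, hc, hR, he⟩
      obtain ⟨rfl, rfl⟩ := List.append_eq_nil_iff.mp he.symm
      have h1 := comps_sum hc
      have h2 : 0 < j := hJ j (by simp)
      simp at h1; omega
    · intro h; exact absurd h (by simp)

end
theorem coars_ne_nil : ∀ (K : List ℕ), K ≠ [] → ∀ I' ∈ coars K, I' ≠ [] := by
  intro K
  cases K with
  | nil => simp
  | cons i K =>
    intro _ I' hI'
    cases K with
    | nil => rw [coars] at hI'; simp at hI'; subst hI'; simp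
    | cons j rest =>
      rw [coars] at hI'
      simp only [Finset.mem_union, Finset.mem_image] at hI'
      rcases hI' with ⟨a, _, rfl⟩ | ⟨a, _, rfl⟩ <;> simp

theorem coars_pos : ∀ (K : List ℕ), (∀ k ∈ K, 0 < k) → ∀ I' ∈ coars K, ∀ x ∈ I', 0 < x := by
  intro K
  induction K with
  | nil => intro _ I' h; rw [coars] at h; simp at h; subst h; simp
  | cons i K ih =>
    intro hK I' hI'
    cases K with
    | nil =>
      rw [coars] at hI'; simp at hI'; subst hI'
      intro x hx; simp at hx; subst hx; exact hK _ List.mem_cons_self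
    | cons j rest =>
      rw [coars] at hI'
      simp only [Finset.mem_union, Finset.mem_image] at hI'
      have hK' : ∀ k ∈ j :: rest, 0 < k := fun k hk => hK k (by simp at hk ⊢; tauto)
      rcases hI' with ⟨a, ha, rfl⟩ | ⟨a, ha, rfl⟩
      · intro x hx
        rcases List.mem_cons.mp hx with rfl | hx
        · exact hK _ List.mem_cons_self
        · exact ih hK' a ha x hx
      · have hane := coars_ne_nil (j :: rest) (by simp) a ha
        cases a with
        | nil => exact absurd rfl hane
        | cons h t =>
          intro x hx
          rcases List.mem_cons.mp hx with rfl | hx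
          · have := hK i (by simp); simp; omega
          · exact ih hK' (h :: t) ha x (List.mem_of_mem_tail hx)

theorem rc_aux : ∀ (n : ℕ), ∀ (K J : List ℕ), K.length ≤ n → (∀ j ∈ J, 0 < j) → (∀ k ∈ K, 0 < k) →
    (K ∈ refines J ↔ J ∈ coars K) := by
  intro n
  induction n with
  | zero =>
    intro K J hlen hJ hK
    have : K = [] := List.eq_nil_of_length_eq_zero (by omega)
    subst this
    rw [nil_mem_refines J hJ, coars]
    simp
  | succ n ih =>
    intro K J hlen hJ hK
    match K with
    | [] =>
      rw [nil_mem_refines J hJ, coars]; simp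
    | [k] =>
      rw [coars]
      have hk : 0 < k := hK k (by simp)
      simp only [Finset.mem_singleton]
      constructor
      · intro h
        cases J with
        | nil => rw [refines_nil] at h; exact absurd h (by simp)
        | cons j J' =>
          rw [refines_cons] at h
          obtain ⟨c, R, hc, hR, he⟩ := h
          have hj : 0 < j := hJ j (by simp)
          cases c with
          | nil => have := comps_sum hc; simp at this; omega
          | cons x t =>
            simp at he
            obtain ⟨rfl, he2⟩ := he
            obtain ⟨rfl, rfl⟩ := he2
            have hjk := comps_sum hc
            simp at hjk
            have : J' = [] := (nil_mem_refines J' (fun y hy => hJ y (by simp [hy]))).mp hR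
            subst this; rw [hjk]
      · rintro rfl
        rw [refines_cons]
        exact ⟨[k], [], (comps_mem k [k]).mpr ⟨by simp, by simpa using hk⟩,
          (refines_nil []).mpr rfl, by simp⟩
    | k :: k2 :: K₂ =>
      have hk : 0 < k := hK k (by simp)
      have hK' : ∀ x ∈ k2 :: K₂, 0 < x := fun x hx => hK x (by simp at hx ⊢; tauto)
      have hlen' : (k2 :: K₂).length ≤ n := by simp at hlen ⊢; omega
      rw [coars]
      simp only [Finset.mem_union, Finset.mem_image]
      constructor
      · intro h
        cases J with
        | nil => rw [refines_nil] at h; exact absurd h (by simp)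
        | cons j J' =>
          rw [refines_cons] at h
          obtain ⟨c, R, hc, hR, he⟩ := h
          have hj : 0 < j := hJ j (by simp)
          have hJ' : ∀ y ∈ J', 0 < y := fun y hy => hJ y (by simp [hy])
          cases c with
          | nil => have := comps_sum hc; simp at this; omega
          | cons x c'' =>
            simp at he
            obtain ⟨rfl, he2⟩ := he
            cases c'' with
            | nil =>
              have hjk := comps_sum hc; simp at hjk
              subst hjk
              simp at he2
              left
              refine ⟨J', ?_, rfl⟩
              exact (ih (k2 :: K₂) J' hlen' hJ' hK').mp (he2 ▸ hR)
            | cons h'' t'' =>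
              right
              set c'' := h'' :: t'' with hc''
              have hcpos : ∀ y ∈ c'', 0 < y := fun y hy => comps_pos hc y (by simp [hc''] at hy ⊢; tauto)
              have hh : 0 < c''.sum := by
                have := hcpos h'' (by simp [hc''])
                simp [hc'']; omega
              have hc2 : c'' ∈ comps c''.sum := (comps_mem _ _).mpr ⟨rfl, hcpos⟩
              have hmem : (k2 :: K₂) ∈ refines (c''.sum :: J') := by
                rw [refines_cons]
                exact ⟨c'', R, hc2, hR, he2⟩
              have := (ih (k2 :: K₂) (c''.sum :: J') hlen'
                (fun y hy => by rcases List.mem_cons.mp hy with rfl | hy; exacts [hh, hJ' y hy]) hK').mp hmem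
              refine ⟨c''.sum :: J', this, ?_⟩
              have hjs := comps_sum hc
              simp at hjs
              simp
              omega
      · rintro (⟨a, ha, rfl⟩ | ⟨a, ha, rfl⟩)
        · have hapos : ∀ y ∈ a, 0 < y := fun y hy => hJ y (by simp [hy])
          have := (ih (k2 :: K₂) a hlen' hapos hK').mpr ha
          rw [refines_cons]
          exact ⟨[k], k2 :: K₂, (comps_mem k [k]).mpr ⟨by simp, by simpa using hk⟩, this, rfl⟩
        · have hane := coars_ne_nil (k2 :: K₂) (by simp) a ha
          cases a with
          | nil => exact absurd rfl hane
          | cons h t =>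
            have hapos : ∀ y ∈ h :: t, 0 < y := coars_pos (k2 :: K₂) hK' _ ha
            have := (ih (k2 :: K₂) (h :: t) hlen' hapos hK').mpr ha
            rw [refines_cons] at this
            obtain ⟨c, R, hc, hR, he⟩ := this
            simp only [List.headD_cons, List.tail_cons]
            rw [refines_cons]
            refine ⟨k :: c, R, ?_, hR, by simp [he]⟩
            refine (comps_mem _ _).mpr ⟨?_, ?_⟩
            · simp [comps_sum hc]
            · intro y hy
              rcases List.mem_cons.mp hy with rfl | hy
              · exact hk
              · exact comps_pos hc y hy

theorem refines_iff_coars (J K : List ℕ) (hJ : ∀ j ∈ J, 0 < j) (hK : ∀ k ∈ K, 0 < k) :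
    K ∈ refines J ↔ J ∈ coars K :=
  rc_aux K.length K J le_rfl hJ hK
theorem F2D_add_self (x : F2D) : x + x = 0 := by
  have h : (1 + 1 : ZMod 2) = 0 := by decide
  calc x + x = (1 + 1 : ZMod 2) • x := by rw [add_smul, one_smul]
  _ = 0 := by rw [h, zero_smul]

theorem cmul_sElem_sElem (A B : List ℕ) : cmul (sElem A) (sElem B) = sElem (A ++ B) := by
  unfold cmul sElem
  rw [Finsupp.sum_single_index, Finsupp.sum_single_index] <;> simp

theorem cmul_zero (x : F2D) : cmul x 0 = 0 := by simp [cmul]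

theorem cmul_add (x y z : F2D) : cmul x (y + z) = cmul x y + cmul x z := by
  unfold cmul
  rw [← Finsupp.sum_add]
  apply Finsupp.sum_congr
  intro I _
  rw [Finsupp.sum_add_index']
  · intro J; simp
  · intro J b c; rw [mul_add, add_smul]

theorem cmul_sum {α : Type} (x : F2D) (s : Finset α) (g : α → F2D) :
    cmul x (∑ i ∈ s, g i) = ∑ i ∈ s, cmul x (g i) := by
  classical
  induction s using Finset.induction_on with
  | empty => simp [cmul_zero]
  | insert a s h ih => rw [Finset.sum_insert h, Finset.sum_insert h, cmul_add, ih]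

theorem sum_comps_succ (n : ℕ) (g : List ℕ → F2D) :
    ∑ d ∈ comps (n+1), g d = ∑ k ∈ Finset.range (n+1), ∑ α ∈ comps k, g ((n+1-k) :: α) := by
  rw [comps]
  rw [Finset.sum_biUnion ?hd]
  case hd =>
    intro a _ b _ hab
    apply Finset.disjoint_left.mpr
    intro x hxa hxb
    simp only [Finset.mem_image] at hxa hxb
    obtain ⟨α, _, rfl⟩ := hxa
    obtain ⟨β, _, he⟩ := hxb
    have h1 := Finset.mem_range.mp a.2
    have h2 := Finset.mem_range.mp b.2
    have hh := (List.cons_eq_cons.mp he).1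
    exact hab (Subtype.ext (by omega))
  rw [← Finset.sum_attach (Finset.range (n+1)) (fun k => ∑ α ∈ comps k, g ((n+1-k) :: α))]
  apply Finset.sum_congr rfl
  intro k _
  rw [Finset.sum_image]
  intro α _ β _ he
  exact (List.cons_eq_cons.mp he).2

theorem key_vanish (m : ℕ) (hm : 0 < m) (g : List ℕ → F2D) :
    ∑ s ∈ Finset.range (m+1), ∑ c ∈ comps (m - s),
      g ((if s = 0 then ([] : List ℕ) else [s]) ++ c) = 0 := by
  obtain ⟨n, rfl⟩ : ∃ n, m = n + 1 := ⟨m - 1, by omega⟩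
  rw [Finset.sum_range_succ']
  have h0 : ∑ c ∈ comps (n+1-0), g ((if (0:ℕ) = 0 then ([] : List ℕ) else [0]) ++ c)
      = ∑ d ∈ comps (n+1), g d := by simp
  have h1 : ∑ s ∈ Finset.range (n+1), ∑ c ∈ comps (n+1-(s+1)),
      g ((if s+1 = 0 then ([] : List ℕ) else [s+1]) ++ c) = ∑ d ∈ comps (n+1), g d := by
    rw [sum_comps_succ]
    apply Finset.sum_nbij' (i := fun s => n - s) (j := fun k => n - k)
    · intro s hs; simp at hs ⊢
    · intro k hk; simp at hk ⊢
    · intro s hs; simp at hs ⊢; omega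
    · intro k hk; simp at hk ⊢; omega
    · intro s hs
      simp only [Finset.mem_range] at hs
      have e1 : n + 1 - (s + 1) = n - s := by omega
      have e2 : n + 1 - (n - s) = s + 1 := by omega
      rw [e1, e2]
      apply Finset.sum_congr rfl
      intro c _
      simp
  rw [h0, h1]
  exact F2D_add_self _

theorem sum_refines_cons (t : ℕ) (M : List ℕ) (f : List ℕ → F2D) :
    ∑ I' ∈ refines ((if t = 0 then ([] : List ℕ) else [t]) ++ M), f I'
      = ∑ c ∈ comps t, ∑ R ∈ refines M, f (c ++ R) := by
  by_cases ht : t = 0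
  · subst ht
    rw [if_pos rfl]
    show ∑ I' ∈ refines M, f I' = _
    rw [show comps 0 = {([] : List ℕ)} from by rw [comps]]
    simp
  · rw [if_neg ht]
    show ∑ I' ∈ refines (t :: M), f I' = _
    rw [refines]
    rw [Finset.sum_image ?inj]
    · rw [Finset.sum_product]
    case inj =>
      rintro ⟨c, R⟩ h1 ⟨c', R'⟩ h2 he
      simp only [Finset.mem_coe, Finset.mem_product] at h1 h2
      have := append_cancel_of_sum c c' R R' he
        (by rw [comps_sum h1.1, comps_sum h2.1])
        (comps_pos h1.1) (comps_pos h2.1)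
      exact Prod.ext this.1 this.2

theorem filter_concat (a : List ℕ) (s : ℕ) :
    (a ++ [s]).filter (· ≠ 0) = a.filter (· ≠ 0) ++ (if s = 0 then [] else [s]) := by
  rw [List.filter_append]
  congr 1
  by_cases h : s = 0 <;> simp [h]

theorem chiF_concat (b : List ℕ) (t : ℕ) :
    chiF ((b ++ [t]).filter (· ≠ 0)) =
      ∑ c ∈ comps t, ∑ R ∈ refines ((b.filter (· ≠ 0)).reverse), sElem (c ++ R) := by
  rw [filter_concat, chiF, ← sum_refines_cons]
  congr 1
  rw [List.reverse_append]
  congr 1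
  by_cases h : t = 0 <;> simp [h]
theorem mem_subLists_cons (i : ℕ) (rest : List ℕ) (x : List ℕ) :
    x ∈ subLists (i :: rest) ↔ ∃ s a, s ∈ Finset.range (i+1) ∧ a ∈ subLists rest ∧ x = s :: a := by
  rw [subLists]
  simp only [Finset.mem_image, Finset.mem_product, Prod.exists]
  constructor
  · rintro ⟨s, a, ⟨hs, ha⟩, rfl⟩; exact ⟨s, a, hs, ha, rfl⟩
  · rintro ⟨s, a, hs, ha, rfl⟩; exact ⟨s, a, ⟨hs, ha⟩, rfl⟩

theorem subLists_length : ∀ (L : List ℕ) (a : List ℕ), a ∈ subLists L → a.length = L.length := by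
  intro L
  induction L with
  | nil => intro a h; rw [subLists] at h; simp at h; subst h; rfl
  | cons i rest ih =>
    intro a h
    rw [mem_subLists_cons] at h
    obtain ⟨s, a', hs, ha', rfl⟩ := h
    simp [ih a' ha']

theorem mem_subLists_concat : ∀ (J : List ℕ) (m : ℕ) (x : List ℕ),
    x ∈ subLists (J ++ [m]) ↔ ∃ a s, a ∈ subLists J ∧ s ∈ Finset.range (m+1) ∧ x = a ++ [s] := by
  intro J
  induction J with
  | nil =>
    intro m x
    show x ∈ subLists (m :: []) ↔ _
    rw [mem_subLists_cons]
    constructor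
    · rintro ⟨s, a, hs, ha, rfl⟩
      rw [subLists] at ha; simp at ha; subst ha
      exact ⟨[], s, by rw [subLists]; simp, hs, rfl⟩
    · rintro ⟨a, s, ha, hs, rfl⟩
      rw [subLists] at ha; simp at ha; subst ha
      exact ⟨s, [], hs, by rw [subLists]; simp, rfl⟩
  | cons i rest ih =>
    intro m x
    show x ∈ subLists (i :: (rest ++ [m])) ↔ _
    rw [mem_subLists_cons]
    constructor
    · rintro ⟨s0, a0, hs0, ha0, rfl⟩
      obtain ⟨a, s, ha, hs, rfl⟩ := (ih m a0).mp ha0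
      exact ⟨s0 :: a, s, (mem_subLists_cons i rest _).mpr ⟨s0, a, hs0, ha, rfl⟩, hs, rfl⟩
    · rintro ⟨a, s, ha, hs, rfl⟩
      obtain ⟨s0, a', hs0, ha', rfl⟩ := (mem_subLists_cons i rest a).mp ha
      exact ⟨s0, a' ++ [s], hs0, (ih m _).mpr ⟨a', s, ha', hs, rfl⟩, rfl⟩

theorem sum_Q (m : ℕ) (G : ℕ → ℕ → F2D) :
    ∑ q ∈ (Finset.range (m+1) ×ˢ Finset.range (m+1)).filter (fun q => q.1 + q.2 = m),
      G q.1 q.2 = ∑ s ∈ Finset.range (m+1), G s (m - s) := by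
  apply Finset.sum_nbij' (i := fun q => q.1) (j := fun s => (s, m - s))
  · intro q hq
    simp only [Finset.mem_filter, Finset.mem_product, Finset.mem_range] at hq ⊢
    omega
  · intro s hs
    simp only [Finset.mem_filter, Finset.mem_product, Finset.mem_range] at hs ⊢
    omega
  · intro q hq
    simp only [Finset.mem_filter, Finset.mem_product, Finset.mem_range] at hq
    have : m - q.1 = q.2 := by omega
    rw [this]
  · intro s _; rfl
  · intro q hq
    simp only [Finset.mem_filter, Finset.mem_product, Finset.mem_range] at hq
    have : m - q.1 = q.2 := by omega
    rw [this]

theorem inner_vanish (m : ℕ) (hm : 0 < m) (A M : List ℕ) :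
    ∑ q ∈ (Finset.range (m+1) ×ˢ Finset.range (m+1)).filter (fun q => q.1 + q.2 = m),
      cmul (sElem (A ++ (if q.1 = 0 then [] else [q.1])))
        (∑ c ∈ comps q.2, ∑ R ∈ refines M, sElem (c ++ R)) = 0 := by
  have step : ∀ s t : ℕ,
      cmul (sElem (A ++ (if s = 0 then [] else [s])))
        (∑ c ∈ comps t, ∑ R ∈ refines M, sElem (c ++ R))
      = ∑ R ∈ refines M, ∑ c ∈ comps t,
          sElem (A ++ ((if s = 0 then [] else [s]) ++ c) ++ R) := by
    intro s t
    rw [cmul_sum]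
    have hc : ∀ c : List ℕ,
        cmul (sElem (A ++ (if s = 0 then [] else [s]))) (∑ R ∈ refines M, sElem (c ++ R))
        = ∑ R ∈ refines M, sElem (A ++ ((if s = 0 then [] else [s]) ++ c) ++ R) := by
      intro c
      rw [cmul_sum]
      apply Finset.sum_congr rfl
      intro R _
      rw [cmul_sElem_sElem]
      simp [List.append_assoc]
    rw [Finset.sum_congr rfl (fun c _ => hc c)]
    rw [Finset.sum_comm]
  rw [Finset.sum_congr rfl (fun q _ => step q.1 q.2)]
  rw [Finset.sum_comm]
  apply Finset.sum_eq_zero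
  intro R _
  rw [sum_Q m (fun s t => ∑ c ∈ comps t,
    sElem (A ++ ((if s = 0 then [] else [s]) ++ c) ++ R))]
  exact key_vanish m hm (fun X => sElem (A ++ X ++ R))

/-- `χ'(S^I) := Σ_{I' : reverse I ∈ C(I')} S^{I'}` satisfies the defining
equation of the conjugation (antipode) of the mod 2 Leibniz--Hopf algebra `𝓕₂`
(whose coproduct is `Δ(S^n) = Σ_{i=0}^{n} S^i ⊗ S^{n−i}`): for every nonempty
sequence `I = (i_1,…,i_n)` of positive integers, summing over all pairs
`a, b ∈ ℕ^n` with `a_j + b_j = i_j` for all `j`, one has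
`Σ_{(a,b)} S^{strip a} * χ'(S^{strip b}) = 0` in `𝓕₂`, where `strip` deletes
all zero entries.  (The first clause records that `refines J` is indeed the set
of all sequences of positive integers of which `J` is a coarsening.) -/
theorem chiF_antipode (I : List ℕ) (hI : I ≠ []) (hpos : ∀ i ∈ I, 0 < i) :
    (∀ J K : List ℕ, (∀ j ∈ J, 0 < j) → (∀ k ∈ K, 0 < k) →
      (K ∈ refines J ↔ J ∈ coars K)) ∧
    ∑ p ∈ (subLists I ×ˢ subLists I).filter
        (fun p => List.zipWith (· + ·) p.1 p.2 = I),
      cmul (sElem (p.1.filter (· ≠ 0))) (chiF (p.2.filter (· ≠ 0))) = 0 := by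
  constructor
  · exact fun J K hJ hK => refines_iff_coars J K hJ hK
  · cases I using List.reverseRecOn with
    | nil => exact absurd rfl hI
    | append_singleton J m =>
      have hm : 0 < m := hpos m (by simp)
      set Q := (Finset.range (m+1) ×ˢ Finset.range (m+1)).filter (fun q => q.1 + q.2 = m) with hQ
      set P := (subLists J ×ˢ subLists J).filter
        (fun p => List.zipWith (· + ·) p.1 p.2 = J) with hP
      have hbij :
          ∑ x ∈ P ×ˢ Q,
            cmul (sElem ((x.1.1 ++ [x.2.1]).filter (· ≠ 0)))
              (chiF ((x.1.2 ++ [x.2.2]).filter (· ≠ 0)))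
          = ∑ p ∈ (subLists (J ++ [m]) ×ˢ subLists (J ++ [m])).filter
              (fun p => List.zipWith (· + ·) p.1 p.2 = (J ++ [m])),
            cmul (sElem (p.1.filter (· ≠ 0))) (chiF (p.2.filter (· ≠ 0))) := by
        apply Finset.sum_bij (i := fun x _ => (x.1.1 ++ [x.2.1], x.1.2 ++ [x.2.2]))
        · rintro ⟨⟨a, b⟩, ⟨s, t⟩⟩ hx
          simp only [hP, hQ, Finset.mem_filter, Finset.mem_product] at hx ⊢
          obtain ⟨⟨⟨ha, hb⟩, hzip⟩, ⟨hs, ht⟩, hst⟩ := hx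
          refine ⟨⟨?_, ?_⟩, ?_⟩
          · exact (mem_subLists_concat J m _).mpr ⟨a, s, ha, hs, rfl⟩
          · exact (mem_subLists_concat J m _).mpr ⟨b, t, hb, ht, rfl⟩
          · rw [List.zipWith_append
              (by rw [subLists_length J a ha, subLists_length J b hb])]
            simp [hzip, hst]
        · rintro ⟨⟨a, b⟩, ⟨s, t⟩⟩ hx ⟨⟨a', b'⟩, ⟨s', t'⟩⟩ hx' he
          simp only [hP, hQ, Finset.mem_filter, Finset.mem_product] at hx hx'
          simp only [Prod.mk.injEq] at he ⊢
          have h1 := List.append_inj he.1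
            (by rw [subLists_length J a hx.1.1.1, subLists_length J a' hx'.1.1.1])
          have h2 := List.append_inj he.2
            (by rw [subLists_length J b hx.1.1.2, subLists_length J b' hx'.1.1.2])
          exact ⟨⟨h1.1, h2.1⟩, (List.cons_eq_cons.mp h1.2).1, (List.cons_eq_cons.mp h2.2).1⟩
        · rintro ⟨u, v⟩ hy
          simp only [Finset.mem_filter, Finset.mem_product] at hy
          obtain ⟨⟨hu, hv⟩, hzip⟩ := hy
          obtain ⟨a, s, ha, hs, rfl⟩ := (mem_subLists_concat J m u).mp hu
          obtain ⟨b, t, hb, ht, rfl⟩ := (mem_subLists_concat J m v).mp hv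
          have hlen : a.length = b.length := by
            rw [subLists_length J a ha, subLists_length J b hb]
          rw [List.zipWith_append hlen] at hzip
          have hz2 := List.append_inj hzip ?len
          case len =>
            rw [List.length_zipWith, subLists_length J a ha, subLists_length J b hb]
            simp
          refine ⟨⟨⟨a, b⟩, ⟨s, t⟩⟩, ?_, rfl⟩
          simp only [hP, hQ, Finset.mem_filter, Finset.mem_product]
          refine ⟨⟨⟨ha, hb⟩, hz2.1⟩, ⟨hs, ht⟩, ?_⟩
          have := (List.cons_eq_cons.mp hz2.2).1
          simpa using this
        · rintro ⟨⟨a, b⟩, ⟨s, t⟩⟩ _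
          rfl
      rw [← hbij, Finset.sum_product]
      apply Finset.sum_eq_zero
      rintro ⟨a, b⟩ _
      refine Eq.trans (Finset.sum_congr rfl fun q _ => ?_)
        (inner_vanish m hm (a.filter (· ≠ 0)) ((b.filter (· ≠ 0)).reverse))
      show cmul (sElem ((a ++ [q.1]).filter (· ≠ 0))) (chiF ((b ++ [q.2]).filter (· ≠ 0))) = _
      rw [filter_concat, chiF_concat]
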